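/- Let λ be a partition of k with depth(λ) = d, and let A be any bijective filling of the Young diagram of λ with {1,…,k}. For any subset S ⊆ {1,…,k} with |S| = d + 1, define the antisymmetrizer Alt_S := Σ_π sgn(π)·π ∈ ℂ[S_k], the sum over all permutations π ∈ S_k fixing every element of the complement of S pointwise. Then Alt_S · c(A) · r(A) = 0 in the group algebra ℂ[S_k]. In particular, skew-symmetrizing the tensor c(A)·r(A)·T over any depth(λ)+1 index positions gives zero, for every T ∈ ⊗^k ℂ^n. -/

import Mathlib

open scoped TensorProduct Classical

noncomputable section

/-- `⊗^k ℂⁿ`. -/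
abbrev TensPow (n k : ℕ) := ⨂[ℂ] _ : Fin k, (Fin n → ℂ)

/-- The place-permutation action `P_π(v₁⊗…⊗v_k) = v_{π⁻¹(1)}⊗…⊗v_{π⁻¹(k)}`. -/
def permTens (n k : ℕ) (π : Equiv.Perm (Fin k)) : TensPow n k →ₗ[ℂ] TensPow n k :=
  (PiTensorProduct.reindex ℂ (fun _ : Fin k => (Fin n → ℂ)) π).toLinearMap

/-- The linear extension of the place-permutation action to the group algebra
`ℂ[S_k]`. -/
def algAct (n k : ℕ) (x : MonoidAlgebra ℂ (Equiv.Perm (Fin k))) (T : TensPow n k) :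
    TensPow n k :=
  x.coeff.sum fun π c => c • permTens n k π T

/-- A (bijective) filling of the Young diagram of `μ` with `{1, …, k}`: a bijection
from the cells of `μ` to `Fin k`. -/
abbrev Filling (μ : YoungDiagram) (k : ℕ) := {c : ℕ × ℕ // c ∈ μ.cells} ≃ Fin k

/-- `π` preserves each row of the filling `A` setwise. -/
def RowPerm {μ : YoungDiagram} {k : ℕ} (A : Filling μ k) (π : Equiv.Perm (Fin k)) :
    Prop :=
  ∀ i : Fin k, (A.symm (π i)).val.1 = (A.symm i).val.1

/-- `π` preserves each column of the filling `A` setwise. -/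
def ColPerm {μ : YoungDiagram} {k : ℕ} (A : Filling μ k) (π : Equiv.Perm (Fin k)) :
    Prop :=
  ∀ i : Fin k, (A.symm (π i)).val.2 = (A.symm i).val.2

/-- The row symmetrizer `r(A) = Σ_{π ∈ Row(A)} π ∈ ℂ[S_k]`. -/
def rowSym {μ : YoungDiagram} {k : ℕ} (A : Filling μ k) :
    MonoidAlgebra ℂ (Equiv.Perm (Fin k)) :=
  ∑ π ∈ Finset.univ.filter (RowPerm A), MonoidAlgebra.single π (1 : ℂ)

/-- The column antisymmetrizer `c(A) = Σ_{π ∈ Col(A)} sgn(π)·π ∈ ℂ[S_k]`. -/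
def colSym {μ : YoungDiagram} {k : ℕ} (A : Filling μ k) :
    MonoidAlgebra ℂ (Equiv.Perm (Fin k)) :=
  ∑ π ∈ Finset.univ.filter (ColPerm A),
    MonoidAlgebra.single π (((Equiv.Perm.sign π : ℤ) : ℂ))

/-- The antisymmetrizer `Alt_S = Σ_π sgn(π)·π ∈ ℂ[S_k]`, the sum over all permutations
fixing every element of the complement of `S` pointwise. -/
def altSym (k : ℕ) (S : Finset (Fin k)) : MonoidAlgebra ℂ (Equiv.Perm (Fin k)) :=
  ∑ π ∈ Finset.univ.filter (fun π : Equiv.Perm (Fin k) => ∀ i : Fin k, i ∉ S → π i = i),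
    MonoidAlgebra.single π (((Equiv.Perm.sign π : ℤ) : ℂ))

section AuxLemmas

variable {k : ℕ}

/-- `π` fixes the complement of `S` pointwise. -/
def FixesCompl (S : Finset (Fin k)) (π : Equiv.Perm (Fin k)) : Prop :=
  ∀ i : Fin k, i ∉ S → π i = i

lemma altSym_def' (S : Finset (Fin k)) :
    altSym k S = ∑ π ∈ Finset.univ.filter (FixesCompl S),
      MonoidAlgebra.single π (((Equiv.Perm.sign π : ℤ) : ℂ)) := by
  unfold altSym
  exact Finset.sum_congr (Finset.filter_congr fun x _ => Iff.rfl) fun _ _ => rfl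

lemma fixesCompl_mul {S : Finset (Fin k)} {π σ : Equiv.Perm (Fin k)}
    (h1 : FixesCompl S π) (h2 : FixesCompl S σ) : FixesCompl S (π * σ) := by
  intro i hi
  simp [Equiv.Perm.mul_apply, h2 i hi, h1 i hi]

lemma fixesCompl_inv {S : Finset (Fin k)} {π : Equiv.Perm (Fin k)}
    (h : FixesCompl S π) : FixesCompl S π⁻¹ := by
  intro i hi
  conv_lhs => rw [← h i hi]
  exact π.symm_apply_apply i

lemma rowPerm_mul {μ : YoungDiagram} {A : Filling μ k} {π σ : Equiv.Perm (Fin k)}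
    (h1 : RowPerm A π) (h2 : RowPerm A σ) : RowPerm A (π * σ) := by
  intro i
  have := h1 (σ i)
  simpa [Equiv.Perm.mul_apply, h2 i] using this.trans (h2 i)

lemma rowPerm_inv {μ : YoungDiagram} {A : Filling μ k} {π : Equiv.Perm (Fin k)}
    (h : RowPerm A π) : RowPerm A π⁻¹ := by
  intro i
  have := h (π⁻¹ i)
  rw [show π (π⁻¹ i) = i from π.apply_symm_apply i] at this
  exact this.symm

lemma single_mul_rowSym {μ : YoungDiagram} {A : Filling μ k} {t : Equiv.Perm (Fin k)}
    (ht : RowPerm A t) :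
    MonoidAlgebra.single t (1 : ℂ) * rowSym A = rowSym A := by
  unfold rowSym
  rw [Finset.mul_sum]
  refine Finset.sum_equiv (Equiv.mulLeft t) ?_ ?_
  · intro π
    simp only [Finset.mem_filter, Finset.mem_univ, true_and, Equiv.coe_mulLeft]
    constructor
    · intro h; exact rowPerm_mul ht h
    · intro h
      have := rowPerm_mul (rowPerm_inv ht) h
      simpa [← mul_assoc] using this
  · intro π _
    simp [MonoidAlgebra.single_mul_single]

lemma sign_sq (t : Equiv.Perm (Fin k)) :
    ((Equiv.Perm.sign t : ℤ) : ℂ) * ((Equiv.Perm.sign t : ℤ) : ℂ) = 1 := by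
  rw [← Int.cast_mul, ← Units.val_mul, Int.units_mul_self, Units.val_one, Int.cast_one]

lemma altSym_mul_single {S : Finset (Fin k)} {t : Equiv.Perm (Fin k)}
    (ht : FixesCompl S t) :
    altSym k S * MonoidAlgebra.single t (1 : ℂ)
      = ((Equiv.Perm.sign t : ℤ) : ℂ) • altSym k S := by
  rw [altSym_def', Finset.sum_mul, Finset.smul_sum]
  refine Finset.sum_equiv (Equiv.mulRight t) ?_ ?_
  · intro π
    simp only [Finset.mem_filter, Finset.mem_univ, true_and, Equiv.coe_mulRight]
    constructor
    · intro h; exact fixesCompl_mul h ht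
    · intro h
      have := fixesCompl_mul h (fixesCompl_inv ht)
      simpa [mul_assoc] using this
  · intro π _
    rw [MonoidAlgebra.single_mul_single, mul_one, MonoidAlgebra.smul_single',
      Equiv.coe_mulRight, map_mul]
    congr 1
    push_cast
    linear_combination (-((Equiv.Perm.sign π : ℤ) : ℂ)) * sign_sq t

lemma altSym_conj (S : Finset (Fin k)) (p : Equiv.Perm (Fin k)) :
    altSym k S * MonoidAlgebra.single p (1 : ℂ)
      = MonoidAlgebra.single p (1 : ℂ) * altSym k (S.image ⇑p⁻¹) := by
  have hmem : ∀ i : Fin k, i ∈ S.image ⇑p⁻¹ ↔ p i ∈ S := by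
    intro i
    simp only [Finset.mem_image]
    constructor
    · rintro ⟨x, hx, rfl⟩; simpa using hx
    · intro h; exact ⟨p i, h, by simp⟩
  rw [altSym_def', altSym_def', Finset.sum_mul, Finset.mul_sum]
  refine Finset.sum_equiv ((Equiv.mulLeft p⁻¹).trans (Equiv.mulRight p)) ?_ ?_
  · intro π
    simp only [Finset.mem_filter, Finset.mem_univ, true_and, Equiv.trans_apply,
      Equiv.coe_mulLeft, Equiv.coe_mulRight]
    constructor
    · intro h i hi
      have hpi : p i ∉ S := fun hc => hi ((hmem i).2 hc)
      simp [Equiv.Perm.mul_apply, h (p i) hpi]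
    · intro h i hi
      have hj : p⁻¹ i ∉ S.image ⇑p⁻¹ := by
        rw [hmem, show p (p⁻¹ i) = i from p.apply_symm_apply i]; exact hi
      have := h (p⁻¹ i) hj
      simp only [Equiv.Perm.mul_apply, show ∀ j, p (p⁻¹ j) = j from p.apply_symm_apply] at this
      have := congrArg p this
      simpa using this
  · intro π _
    simp only [Equiv.trans_apply, Equiv.coe_mulLeft, Equiv.coe_mulRight,
      MonoidAlgebra.single_mul_single, mul_one, one_mul]
    have hg : p * (p⁻¹ * π * p) = π * p := by group
    have haux : ∀ a b : ℤˣ, a * b * a = b := fun a b => by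
      rw [mul_comm a b, mul_assoc, Int.units_mul_self, mul_one]
    have hs : Equiv.Perm.sign (p⁻¹ * π * p) = Equiv.Perm.sign π := by
      rw [map_mul, map_mul, Equiv.Perm.sign_inv, haux]
    rw [hg, hs]

lemma altSym_mul_rowSym_eq_zero {μ : YoungDiagram} {A : Filling μ k}
    {S' : Finset (Fin k)}
    (h : ∃ i ∈ S', ∃ j ∈ S', i ≠ j ∧ (A.symm i).val.1 = (A.symm j).val.1) :
    altSym k S' * rowSym A = 0 := by
  obtain ⟨i, hi, j, hj, hij, hrow⟩ := h
  set t := Equiv.swap i j with ht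
  have htf : FixesCompl S' t := by
    intro x hx
    exact Equiv.swap_apply_of_ne_of_ne (fun h => hx (h ▸ hi)) (fun h => hx (h ▸ hj))
  have htr : RowPerm A t := by
    intro x
    rcases eq_or_ne x i with rfl | hxi
    · rw [ht, Equiv.swap_apply_left]; exact hrow.symm
    rcases eq_or_ne x j with rfl | hxj
    · rw [ht, Equiv.swap_apply_right]; exact hrow
    · rw [ht, Equiv.swap_apply_of_ne_of_ne hxi hxj]
  have hsign : ((Equiv.Perm.sign t : ℤ) : ℂ) = -1 := by
    rw [ht, Equiv.Perm.sign_swap hij]; simp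
  set X := altSym k S' * rowSym A with hX
  have key : X = -X := by
    conv_lhs => rw [hX, ← single_mul_rowSym htr, ← mul_assoc, altSym_mul_single htf,
      hsign, smul_mul_assoc]
    simp [hX]
  have h2 : (2 : ℂ) • X = 0 := by
    rw [two_smul]
    nth_rewrite 1 [key]
    simp
  rcases smul_eq_zero.mp h2 with h | h
  · exact absurd h two_ne_zero
  · exact h

end AuxLemmas

/-- The place-permutation action as a monoid hom to endomorphisms. -/
def permHom (n k : ℕ) : Equiv.Perm (Fin k) →* Module.End ℂ (TensPow n k) where
  toFun := permTens n k
  map_one' := by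
    show permTens n k 1 = 1
    unfold permTens
    rw [show (1 : Equiv.Perm (Fin k)) = Equiv.refl (Fin k) from rfl,
      PiTensorProduct.reindex_refl]
    rfl
  map_mul' π σ := by
    show permTens n k (π * σ) = permTens n k π ∘ₗ permTens n k σ
    unfold permTens
    rw [Equiv.Perm.mul_def, ← PiTensorProduct.reindex_trans σ π]
    rfl

lemma algAct_eq (n k : ℕ) (x : MonoidAlgebra ℂ (Equiv.Perm (Fin k))) (T : TensPow n k) :
    algAct n k x T
      = (MonoidAlgebra.lift ℂ (Module.End ℂ (TensPow n k)) (Equiv.Perm (Fin k))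
          (permHom n k) x) T := by
  rw [MonoidAlgebra.lift_apply]
  unfold algAct
  rw [Finsupp.sum, Finsupp.sum]
  simp [permHom]

/-- let `λ` be a partition of `k` with `depth(λ) = d` and `A` any
bijective filling of its Young diagram with `{1,…,k}`.  For any `S ⊆ {1,…,k}` with
`|S| = d + 1`, `Alt_S · c(A) · r(A) = 0` in `ℂ[S_k]`.  In particular, skew-symmetrizing
the tensor `c(A)·r(A)·T` over any `depth(λ)+1` index positions gives zero, for every
`T ∈ ⊗^k ℂⁿ`. -/
theorem alt_young_symmetrizer_eq_zero
    (n k : ℕ) (hn : 1 ≤ n) (μ : YoungDiagram) (hμ : μ.card = k)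
    (A : Filling μ k) (S : Finset (Fin k)) (hS : S.card = μ.colLen 0 + 1) :
    altSym k S * colSym A * rowSym A = 0 ∧
      ∀ T : TensPow n k,
        algAct n k (altSym k S) (algAct n k (colSym A * rowSym A) T) = 0 := by
  have key : ∀ S' : Finset (Fin k), S'.card = μ.colLen 0 + 1 →
      altSym k S' * rowSym A = 0 := by
    intro S' hc
    apply altSym_mul_rowSym_eq_zero
    have hmap : ∀ x ∈ S', (A.symm x).val.1 ∈ Finset.range (μ.colLen 0) := by
      intro x _
      rw [Finset.mem_range, ← YoungDiagram.mem_iff_lt_colLen]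
      have hcell : (A.symm x).val ∈ μ := (YoungDiagram.mem_cells _).mp (A.symm x).2
      exact μ.up_left_mem le_rfl (Nat.zero_le _) (by rw [Prod.mk.eta]; exact hcell)
    have hlt : (Finset.range (μ.colLen 0)).card < S'.card := by
      rw [Finset.card_range, hc]; omega
    obtain ⟨i, hi, j, hj, hij, he⟩ :=
      Finset.exists_ne_map_eq_of_card_lt_of_maps_to hlt hmap
    exact ⟨i, hi, j, hj, hij, he⟩
  have h1 : altSym k S * colSym A * rowSym A = 0 := by
    unfold colSym
    rw [Finset.mul_sum, Finset.sum_mul]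
    apply Finset.sum_eq_zero
    intro p _
    have hsingle : MonoidAlgebra.single p (((Equiv.Perm.sign p : ℤ) : ℂ))
        = ((Equiv.Perm.sign p : ℤ) : ℂ) • MonoidAlgebra.single p (1 : ℂ) := by
      rw [MonoidAlgebra.smul_single', mul_one]
    rw [hsingle, mul_smul_comm, smul_mul_assoc, altSym_conj, mul_assoc,
      key _ (by rw [Finset.card_image_of_injective _ (Equiv.injective _), hS]),
      mul_zero, smul_zero]
  refine ⟨h1, ?_⟩
  intro T
  rw [algAct_eq, algAct_eq, ← Module.End.mul_apply, ← map_mul, ← mul_assoc, h1,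
    map_zero, LinearMap.zero_apply]
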